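/- For every j = 1,…,m, the trace of the bilinear form A_j with respect to the inner product Q|_𝔭 equals d_j(1−κ_j); that is, for any Q-orthonormal basis (v_1,…,v_n) of 𝔭 one has ∑_{l=1}^n A_j(v_l, v_l) = d_j(1−κ_j). -/

import Mathlib

open scoped RealInnerProductSpace

lemma aux_onb {V : Type*} [AddCommGroup V] [Module ℝ V] [FiniteDimensional ℝ V]
    (Φ : LinearMap.BilinForm ℝ V)
    (hsymm : ∀ x y, Φ x y = Φ y x)
    (hpos : ∀ x : V, x ≠ 0 → 0 < Φ x x) :
    ∃ b : Fin (Module.finrank ℝ V) → V,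
      (∀ i k, Φ (b i) (b k) = if i = k then 1 else 0) ∧
      (∀ x, ∑ i, Φ x (b i) • b i = x) ∧
      (∀ f : V →ₗ[ℝ] V, LinearMap.trace ℝ V f = ∑ i, Φ (f (b i)) (b i)) := by
  letI c : InnerProductSpace.Core ℝ V :=
    { inner := fun x y => Φ x y
      conj_inner_symm := fun x y => by simpa using hsymm y x
      re_inner_nonneg := fun x => by
        rcases eq_or_ne x 0 with h | h
        · simp [h]
        · simpa using (hpos x h).le
      add_left := fun x y z => by simp
      smul_left := fun x y r => by simp
      definite := fun x hx => by
        by_contra h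
        exact (hpos x h).ne' (by simpa using hx) }
  letI : NormedAddCommGroup V := c.toNormedAddCommGroup
  letI : InnerProductSpace ℝ V := InnerProductSpace.ofCore c.toCore
  have hinner : ∀ x y : V, ⟪x, y⟫ = Φ x y := fun x y => rfl
  set b := stdOrthonormalBasis ℝ V with hb
  refine ⟨fun i => b i, ?_, ?_, ?_⟩
  · intro i k
    rw [← hinner]
    exact orthonormal_iff_ite.mp b.orthonormal i k
  · intro x
    have := b.sum_repr' x
    simp_rw [hinner] at this
    calc ∑ i, Φ x (b i) • b i = ∑ i, Φ (b i) x • b i := by simp_rw [hsymm]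
      _ = x := this
  · intro f
    rw [LinearMap.trace_eq_matrix_trace ℝ b.toBasis, Matrix.trace]
    congr 1
    ext i
    rw [Matrix.diag_apply, LinearMap.toMatrix_apply, b.coe_toBasis_repr_apply,
      b.repr_apply_apply, hinner, hsymm, b.coe_toBasis]

theorem stmt_0
    (𝔤 : Type*) [LieRing 𝔤] [LieAlgebra ℝ 𝔤] [FiniteDimensional ℝ 𝔤]
    (𝔭 : Submodule ℝ 𝔤) (𝔨 : LieSubalgebra ℝ 𝔤)
    (hcompl : IsCompl 𝔭 𝔨.toSubmodule)
    (hkp : ∀ x ∈ 𝔨, ∀ y ∈ 𝔭, ⁅x, y⁆ ∈ 𝔭)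
    (hpp : ∀ x ∈ 𝔭, ∀ y ∈ 𝔭, ⁅x, y⁆ ∈ 𝔨)
    (horth : ∀ x ∈ 𝔭, ∀ y ∈ 𝔨, killingForm ℝ 𝔤 x y = 0)
    (hpos : ∀ x ∈ 𝔭, x ≠ 0 → 0 < killingForm ℝ 𝔤 x x)
    (hneg : ∀ x ∈ 𝔨, x ≠ 0 → killingForm ℝ 𝔤 x x < 0)
    (Q : LinearMap.BilinForm ℝ 𝔤)
    (hQpp : ∀ x ∈ 𝔭, ∀ y ∈ 𝔭, Q x y = killingForm ℝ 𝔤 x y)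
    (hQkk : ∀ x ∈ 𝔨, ∀ y ∈ 𝔨, Q x y = -(killingForm ℝ 𝔤 x y))
    (hQpk : ∀ x ∈ 𝔭, ∀ y ∈ 𝔨, Q x y = 0 ∧ Q y x = 0)
    (m : ℕ) (𝔨s : Fin m → LieIdeal ℝ ↥𝔨) (κ : Fin m → ℝ)
    (hsup : (⨆ j, 𝔨s j) = ⊤)
    (horthk : ∀ j k, j ≠ k → ∀ x ∈ 𝔨s j, ∀ y ∈ 𝔨s k,
        killingForm ℝ 𝔤 (x : 𝔤) (y : 𝔤) = 0)
    (hκ : ∀ j, ∀ x y : ↥(𝔨s j),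
        killingForm ℝ ↥(𝔨s j) x y
          = κ j * killingForm ℝ 𝔤 ((x : ↥𝔨) : 𝔤) ((y : ↥𝔨) : 𝔤))
    (π : Fin m → (𝔤 →ₗ[ℝ] 𝔤))
    (hπmem : ∀ j x, ∃ y : ↥𝔨, y ∈ 𝔨s j ∧ (y : 𝔤) = π j x)
    (hπorth : ∀ j x, ∀ y : ↥𝔨, y ∈ 𝔨s j → Q (x - π j x) (y : 𝔤) = 0)
    (j : Fin m) (v : Fin (Module.finrank ℝ ↥𝔭) → 𝔤)
    (hv𝔭 : ∀ l, v l ∈ 𝔭)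
    (hvon : ∀ l l', Q (v l) (v l') = if l = l' then 1 else 0)
    (hvspan : Submodule.span ℝ (Set.range v) = 𝔭) :
    ∑ l, LinearMap.trace ℝ 𝔤
        (π j ∘ₗ LieAlgebra.ad ℝ 𝔤 (v l) ∘ₗ LieAlgebra.ad ℝ 𝔤 (v l))
      = (Module.finrank ℝ ↥(𝔨s j) : ℝ) * (1 - κ j) := by
  classical
  haveI : FiniteDimensional ℝ ↥𝔨 :=
    inferInstanceAs (FiniteDimensional ℝ ↥(𝔨.toSubmodule))
  haveI : FiniteDimensional ℝ ↥(𝔨s j) :=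
    inferInstanceAs (FiniteDimensional ℝ ↥(LieSubmodule.toSubmodule (𝔨s j)))
  have hBsymm : ∀ x y : 𝔤, killingForm ℝ 𝔤 x y = killingForm ℝ 𝔤 y x :=
    fun x y => LieModule.traceForm_comm ℝ 𝔤 𝔤 x y
  have hBinv : ∀ x y z : 𝔤, killingForm ℝ 𝔤 ⁅x, y⁆ z = - killingForm ℝ 𝔤 y ⁅x, z⁆ :=
    fun x y z => LieModule.traceForm_apply_lie_apply' ℝ 𝔤 𝔤 x y z
  -- inclusion of the ideal into 𝔤
  set f : ↥(𝔨s j) →ₗ[ℝ] 𝔤 :=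
    { toFun := fun x => ((x : ↥𝔨) : 𝔤)
      map_add' := fun x y => rfl
      map_smul' := fun c x => rfl } with hf
  have hfmem : ∀ x : ↥(𝔨s j), f x ∈ 𝔨 := fun x => (x : ↥𝔨).2
  have hfinj : ∀ x : ↥(𝔨s j), f x = 0 → x = 0 := by
    intro x hx
    have h1 : ((x : ↥𝔨) : 𝔤) = 0 := hx
    have h2 : (x : ↥𝔨) = 0 := by exact_mod_cast h1
    exact_mod_cast h2
  have hfbrkt : ∀ x y : ↥(𝔨s j), f ⁅x, y⁆ = ⁅f x, f y⁆ := fun x y => rfl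
  set Φ : LinearMap.BilinForm ℝ ↥(𝔨s j) := LinearMap.compl₁₂ Q f f with hΦ
  have hΦapply : ∀ x y : ↥(𝔨s j), Φ x y = Q (f x) (f y) := fun x y => rfl
  have hΦsymm : ∀ x y : ↥(𝔨s j), Φ x y = Φ y x := by
    intro x y
    rw [hΦapply, hΦapply, hQkk _ (hfmem x) _ (hfmem y), hQkk _ (hfmem y) _ (hfmem x),
      hBsymm]
  have hΦpos : ∀ x : ↥(𝔨s j), x ≠ 0 → 0 < Φ x x := by
    intro x hx
    have hne : f x ≠ 0 := fun h => hx (hfinj x h)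
    rw [hΦapply, hQkk _ (hfmem x) _ (hfmem x)]
    exact neg_pos.mpr (hneg _ (hfmem x) hne)
  obtain ⟨b, hbon, hbrepr, hbtr⟩ := aux_onb Φ hΦsymm hΦpos
  set e : Fin (Module.finrank ℝ ↥(𝔨s j)) → 𝔤 := fun a => f (b a) with he
  have he𝔨 : ∀ a, e a ∈ 𝔨 := fun a => hfmem (b a)
  have heQ : ∀ a a', Q (e a) (e a') = if a = a' then 1 else 0 := fun a a' => hbon a a'
  -- expansion of elements of the ideal in the orthonormal basis
  have hexp : ∀ y : ↥𝔨, y ∈ 𝔨s j → ∑ a, Q (y : 𝔤) (e a) • e a = (y : 𝔤) := by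
    intro y hy
    have h := congrArg f (hbrepr ⟨y, hy⟩)
    rw [map_sum] at h
    exact h
  -- the projections as explicit operators
  set Pj : 𝔤 →ₗ[ℝ] 𝔤 := ∑ a, LinearMap.smulRight (Q.flip (e a)) (e a) with hPj
  set Pp : 𝔤 →ₗ[ℝ] 𝔤 := ∑ l, LinearMap.smulRight (Q.flip (v l)) (v l) with hPp
  have hPjapply : ∀ x, Pj x = ∑ a, Q x (e a) • e a := by
    intro x; simp [hPj, LinearMap.sum_apply]
  have hPpapply : ∀ x, Pp x = ∑ l, Q x (v l) • v l := by
    intro x; simp [hPp, LinearMap.sum_apply]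
  -- π j coincides with Pj
  have hπPj : π j = Pj := by
    ext x
    obtain ⟨y, hy, hyx⟩ := hπmem j x
    have h2 : ∀ a, Q (π j x) (e a) = Q x (e a) := by
      intro a
      have h0 := hπorth j x (b a : ↥𝔨) (b a).2
      have h1 : Q x (e a) - Q (π j x) (e a) = 0 := by
        rw [← LinearMap.sub_apply, ← map_sub]; exact h0
      linarith
    rw [hPjapply]
    calc π j x = (y : 𝔤) := hyx.symm
      _ = ∑ a, Q (y : 𝔤) (e a) • e a := (hexp y hy).symm
      _ = ∑ a, Q x (e a) • e a := by
          refine Finset.sum_congr rfl fun a _ => ?_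
          rw [hyx, h2]
  -- behaviour of the projections on 𝔭 and on the ideal
  have hPp_id : ∀ z ∈ 𝔭, Pp z = z := by
    intro z hz
    rw [← hvspan] at hz
    induction hz using Submodule.span_induction with
    | mem x h =>
        obtain ⟨l, rfl⟩ := h
        rw [hPpapply]
        simp [hvon]
    | zero => simp
    | add x y hx hy ihx ihy => rw [map_add, ihx, ihy]
    | smul a x hx ihx => rw [map_smul, ihx]
  have hPp_zero : ∀ z ∈ 𝔨, Pp z = 0 := by
    intro z hz
    rw [hPpapply]
    refine Finset.sum_eq_zero fun l _ => ?_
    rw [(hQpk (v l) (hv𝔭 l) z hz).2, zero_smul]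
  have hPj_zero : ∀ z ∈ 𝔭, Pj z = 0 := by
    intro z hz
    rw [hPjapply]
    refine Finset.sum_eq_zero fun a _ => ?_
    rw [(hQpk z hz (e a) (he𝔨 a)).1, zero_smul]
  have hPj_id : ∀ y : ↥𝔨, y ∈ 𝔨s j → Pj (y : 𝔤) = (y : 𝔤) := by
    intro y hy; rw [hPjapply]; exact hexp y hy
  -- general trace formula
  have htr : ∀ (N : ℕ) (w : Fin N → 𝔤) (g : 𝔤 →ₗ[ℝ] 𝔤),
      LinearMap.trace ℝ 𝔤 ((∑ i, LinearMap.smulRight (Q.flip (w i)) (w i)) ∘ₗ g)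
        = ∑ i, Q (g (w i)) (w i) := by
    intro N w g
    have hsc : ((∑ i, (Q.flip (w i)).smulRight (w i)) ∘ₗ g)
        = ∑ i, ((Q.flip (w i)).smulRight (w i) ∘ₗ g) := by
      ext x; simp
    rw [hsc, map_sum]
    refine Finset.sum_congr rfl fun i _ => ?_
    have h1 : (LinearMap.smulRight (Q.flip (w i)) (w i)) ∘ₗ g
        = (LinearMap.toSpanSingleton ℝ 𝔤 (w i)) ∘ₗ ((Q.flip (w i)) ∘ₗ g) := by
      ext x
      simp [LinearMap.toSpanSingleton_apply]
    rw [h1, LinearMap.trace_comp_comm']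
    set h : ℝ →ₗ[ℝ] ℝ := ((Q.flip (w i)) ∘ₗ g) ∘ₗ LinearMap.toSpanSingleton ℝ 𝔤 (w i) with hh
    have h2 : h = h 1 • LinearMap.id := by
      refine LinearMap.ext fun x => ?_
      have hx : h x = x • h 1 := by rw [← map_smul, smul_eq_mul, mul_one]
      simp [hx, smul_eq_mul, mul_comm]
    rw [h2, map_smul, LinearMap.trace_id]
    have h3 : h 1 = Q (g (w i)) (w i) := by
      simp [hh, LinearMap.toSpanSingleton_apply, LinearMap.flip_apply]
    rw [h3]
    simp
  -- membership lemmas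
  have hadpp : ∀ X ∈ 𝔭, ∀ z ∈ 𝔨, ⁅X, z⁆ ∈ 𝔭 := by
    intro X hX z hz
    rw [← lie_skew]
    exact neg_mem (hkp z hz X hX)
  -- pointwise key identity 1
  have key1 : ∀ X ∈ 𝔭, ∀ z ∈ 𝔨, Q ⁅X, ⁅X, z⁆⁆ z = Q ⁅X, z⁆ ⁅X, z⁆ := by
    intro X hX z hz
    have hY : ⁅X, z⁆ ∈ 𝔭 := hadpp X hX z hz
    have hXY : ⁅X, ⁅X, z⁆⁆ ∈ 𝔨 := hpp X hX _ hY
    rw [hQkk _ hXY z hz, hBinv X ⁅X, z⁆ z, hQpp _ hY _ hY, neg_neg]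
  -- pointwise key identity 2
  have key2 : ∀ z ∈ 𝔨, ∀ X ∈ 𝔭, Q ⁅z, X⁆ ⁅z, X⁆ = - Q ⁅z, ⁅z, X⁆⁆ X := by
    intro z hz X hX
    have hY : ⁅z, X⁆ ∈ 𝔭 := hkp z hz X hX
    have hZY : ⁅z, ⁅z, X⁆⁆ ∈ 𝔭 := hkp z hz _ hY
    rw [hQpp _ hY _ hY, hBinv z X ⁅z, X⁆, hQpp _ hZY X hX, hBsymm]
  -- operator identity: (Pp + Pj) ∘ (ad e a)² = (ad e a)²
  have hop : ∀ a, (Pp + Pj) ∘ₗ (LieAlgebra.ad ℝ 𝔤 (e a) ∘ₗ LieAlgebra.ad ℝ 𝔤 (e a))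
      = LieAlgebra.ad ℝ 𝔤 (e a) ∘ₗ LieAlgebra.ad ℝ 𝔤 (e a) := by
    intro a
    ext x
    have hx : x ∈ 𝔭 ⊔ 𝔨.toSubmodule := by rw [hcompl.codisjoint.eq_top]; trivial
    obtain ⟨p, hp, k, hk, rfl⟩ := Submodule.mem_sup.mp hx
    have hFP : ∀ z ∈ 𝔭, (Pp + Pj) ⁅e a, ⁅e a, z⁆⁆ = ⁅e a, ⁅e a, z⁆⁆ := by
      intro z hz
      have h1 : ⁅e a, z⁆ ∈ 𝔭 := hkp _ (he𝔨 a) z hz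
      have h2 : ⁅e a, ⁅e a, z⁆⁆ ∈ 𝔭 := hkp _ (he𝔨 a) _ h1
      rw [LinearMap.add_apply, hPp_id _ h2, hPj_zero _ h2, add_zero]
    have hFK : ∀ z ∈ 𝔨.toSubmodule, (Pp + Pj) ⁅e a, ⁅e a, z⁆⁆ = ⁅e a, ⁅e a, z⁆⁆ := by
      intro z hz
      set k' : ↥𝔨 := ⟨z, hz⟩ with hk'
      set ba : ↥𝔨 := (b a : ↥𝔨) with hba
      have hmem : ⁅ba, ⁅ba, k'⁆⁆ ∈ 𝔨s j := by
        have h1 : ⁅⁅ba, k'⁆, ba⁆ ∈ 𝔨s j := lie_mem_right ℝ ↥𝔨 (𝔨s j) _ _ (b a).2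
        rw [← lie_skew]
        exact neg_mem h1
      have hcoe : ((⁅ba, ⁅ba, k'⁆⁆ : ↥𝔨) : 𝔤) = ⁅e a, ⁅e a, z⁆⁆ := rfl
      have h2 : ⁅e a, ⁅e a, z⁆⁆ ∈ 𝔨 := by rw [← hcoe]; exact (⁅ba, ⁅ba, k'⁆⁆ : ↥𝔨).2
      rw [LinearMap.add_apply, hPp_zero _ h2, zero_add, ← hcoe, hPj_id _ hmem]
    simp only [LinearMap.comp_apply, LieAlgebra.ad_apply, lie_add]
    rw [map_add, hFP p hp, hFK k hk]
  -- trace of π j ∘ (ad e a)² equals the Killing form of the ideal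
  have hKj : ∀ a, LinearMap.trace ℝ 𝔤 (Pj ∘ₗ (LieAlgebra.ad ℝ 𝔤 (e a) ∘ₗ LieAlgebra.ad ℝ 𝔤 (e a)))
      = killingForm ℝ ↥(𝔨s j) (b a) (b a) := by
    intro a
    rw [hPj, htr]
    rw [killingForm_apply_apply, hbtr]
    refine Finset.sum_congr rfl fun a' _ => ?_
    simp only [LinearMap.comp_apply, LieAlgebra.ad_apply]
    rw [hΦapply, hfbrkt, hfbrkt]
  have hBee : ∀ a, killingForm ℝ 𝔤 (e a) (e a) = -1 := by
    intro a
    have h1 := heQ a a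
    rw [if_pos rfl, hQkk _ (he𝔨 a) _ (he𝔨 a)] at h1
    linarith
  -- per-basis-vector computation
  have hfix : ∀ a, ∑ l, Q ⁅v l, e a⁆ ⁅v l, e a⁆ = 1 - κ j := by
    intro a
    have h1 : ∀ l, Q ⁅v l, e a⁆ ⁅v l, e a⁆
        = - Q ((LieAlgebra.ad ℝ 𝔤 (e a) ∘ₗ LieAlgebra.ad ℝ 𝔤 (e a)) (v l)) (v l) := by
      intro l
      have hswap : ⁅v l, e a⁆ = -⁅e a, v l⁆ := (lie_skew _ _).symm
      rw [hswap]
      simp only [map_neg, LinearMap.neg_apply, neg_neg]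
      rw [key2 _ (he𝔨 a) _ (hv𝔭 l)]
      simp [LieAlgebra.ad_apply]
    rw [Finset.sum_congr rfl fun l _ => h1 l, Finset.sum_neg_distrib,
      ← htr _ v (LieAlgebra.ad ℝ 𝔤 (e a) ∘ₗ LieAlgebra.ad ℝ 𝔤 (e a)), ← hPp]
    -- now relate traces
    have h2 : LinearMap.trace ℝ 𝔤 (Pp ∘ₗ (LieAlgebra.ad ℝ 𝔤 (e a) ∘ₗ LieAlgebra.ad ℝ 𝔤 (e a)))
        + LinearMap.trace ℝ 𝔤 (Pj ∘ₗ (LieAlgebra.ad ℝ 𝔤 (e a) ∘ₗ LieAlgebra.ad ℝ 𝔤 (e a)))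
        = killingForm ℝ 𝔤 (e a) (e a) := by
      rw [← map_add, ← LinearMap.add_comp, hop a, ← killingForm_apply_apply]
    have h3 := hKj a
    have h4 := hκ j (b a) (b a)
    have h5 : killingForm ℝ 𝔤 ((((b a) : ↥𝔨)) : 𝔤) ((((b a) : ↥𝔨)) : 𝔤)
        = killingForm ℝ 𝔤 (e a) (e a) := rfl
    rw [h5, hBee a] at h4
    rw [hBee a] at h2
    linarith [h2, h3, h4]
  -- final assembly
  calc ∑ l, LinearMap.trace ℝ 𝔤
        (π j ∘ₗ LieAlgebra.ad ℝ 𝔤 (v l) ∘ₗ LieAlgebra.ad ℝ 𝔤 (v l))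
      = ∑ l, ∑ a, Q ⁅v l, ⁅v l, e a⁆⁆ (e a) := by
        refine Finset.sum_congr rfl fun l _ => ?_
        rw [hπPj, hPj, htr]
        refine Finset.sum_congr rfl fun a _ => ?_
        simp [LieAlgebra.ad_apply]
    _ = ∑ l, ∑ a, Q ⁅v l, e a⁆ ⁅v l, e a⁆ := by
        refine Finset.sum_congr rfl fun l _ => Finset.sum_congr rfl fun a _ => ?_
        exact key1 _ (hv𝔭 l) _ (he𝔨 a)
    _ = ∑ a, ∑ l, Q ⁅v l, e a⁆ ⁅v l, e a⁆ := Finset.sum_comm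
    _ = ∑ a : Fin (Module.finrank ℝ ↥(𝔨s j)), (1 - κ j) :=
        Finset.sum_congr rfl fun a _ => hfix a
    _ = (Module.finrank ℝ ↥(𝔨s j) : ℝ) * (1 - κ j) := by
        rw [Finset.sum_const, Finset.card_fin, nsmul_eq_mul]
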